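/- The bivariate max-product Bernstein operators T_n on the triangle Δ = {(x₁,x₂) : 0 ≤ x₁, x₂, x₁+x₂ ≤ 1}, defined by T_n(f)(x₁,x₂) = [max over 0≤i≤n, 0≤j≤n−i of C(n,i)C(n−i,j)x₁^i x₂^j (1−x₁−x₂)^{n−i−j} f(i/n, j/n)] divided by [the same maximum with f replaced by 1], are sublinear, monotone and unital operators from C(Δ) to itself. -/

import Mathlib

/-- The triangle `Δ = {(x₁,x₂) : 0 ≤ x₁, 0 ≤ x₂, x₁ + x₂ ≤ 1}`. -/
def Tri : Set (ℝ × ℝ) := {p | 0 ≤ p.1 ∧ 0 ≤ p.2 ∧ p.1 + p.2 ≤ 1}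

/-- The basis term `C(n,i) C(n-i,j) x₁^i x₂^j (1 - x₁ - x₂)^{n-i-j}`. -/
noncomputable def bern (n i j : ℕ) (p : ℝ × ℝ) : ℝ :=
  (n.choose i : ℝ) * ((n - i).choose j : ℝ) * p.1 ^ i * p.2 ^ j *
    (1 - p.1 - p.2) ^ (n - i - j)

/-- The node `(i/n, j/n)` as a point of the triangle `Δ`. -/
noncomputable def node (n i j : ℕ) (hi : i ≤ n) (hij : i + j ≤ n) : Tri :=
  ⟨((i : ℝ) / n, (j : ℝ) / n), by
    rcases Nat.eq_zero_or_pos n with hn | hn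
    · subst hn
      have hi0 : i = 0 := Nat.le_zero.mp hi
      have hj0 : j = 0 := by omega
      subst hi0; subst hj0
      simp [Tri]
    · have hn' : (0 : ℝ) < n := by exact_mod_cast hn
      refine ⟨by positivity, by positivity, ?_⟩
      rw [← add_div, div_le_one hn']
      exact_mod_cast hij⟩

/-- The max-product numerator: the maximum over `0 ≤ i ≤ n`, `0 ≤ j ≤ n - i` of
`bern n i j x · f(i/n, j/n)`. -/
noncomputable def maxProdNum (n : ℕ) (f : C(Tri, ℝ)) (x : Tri) : ℝ :=
  ⨆ i : Fin (n + 1), ⨆ j : Fin (n + 1 - i.1),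
    bern n i.1 j.1 x * f (node n i.1 j.1 (Nat.lt_succ_iff.mp i.isLt)
      (by have := i.isLt; have := j.isLt; omega))

lemma bern_nonneg (n i j : ℕ) (x : Tri) : 0 ≤ bern n i j x.1 := by
  obtain ⟨h1, h2, h3⟩ := x.2
  have h4 : (0 : ℝ) ≤ 1 - (x.1).1 - (x.1).2 := by linarith
  unfold bern; positivity

lemma le_maxProdNum (n : ℕ) (f : C(Tri, ℝ)) (x : Tri) (i j : ℕ) (hi : i ≤ n)
    (hij : i + j ≤ n) :
    bern n i j x.1 * f (node n i j hi hij) ≤ maxProdNum n f x := by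
  have hi' : i < n + 1 := by omega
  have hj' : j < n + 1 - i := by omega
  unfold maxProdNum
  have h1 := le_ciSup (f := fun i : Fin (n + 1) =>
      ⨆ j : Fin (n + 1 - i.1), bern n i.1 j.1 x.1 * f (node n i.1 j.1
        (Nat.lt_succ_iff.mp i.isLt) (by have := i.isLt; have := j.isLt; omega)))
    (Set.finite_range _).bddAbove (⟨i, hi'⟩ : Fin (n + 1))
  have h2 := le_ciSup (f := fun j : Fin (n + 1 - i) =>
      bern n i j.1 x.1 * f (node n i j.1 hi (by have := j.isLt; omega)))
    (Set.finite_range _).bddAbove (⟨j, hj'⟩ : Fin (n + 1 - i))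
  exact le_trans h2 h1

lemma maxProdNum_le (n : ℕ) (f : C(Tri, ℝ)) (x : Tri) (c : ℝ)
    (h : ∀ i j (hi : i ≤ n) (hij : i + j ≤ n),
      bern n i j x.1 * f (node n i j hi hij) ≤ c) :
    maxProdNum n f x ≤ c := by
  unfold maxProdNum
  refine ciSup_le fun i => ?_
  haveI : Nonempty (Fin (n + 1 - i.1)) := ⟨⟨0, by have := i.isLt; omega⟩⟩
  exact ciSup_le fun j => h i.1 j.1 _ _

lemma maxProdNum_one_pos (n : ℕ) (x : Tri) : 0 < maxProdNum n 1 x := by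
  obtain ⟨h1, h2, h3⟩ := x.2
  rcases lt_or_eq_of_le h1 with hx1 | hx1
  · refine lt_of_lt_of_le ?_ (le_maxProdNum n 1 x n 0 le_rfl (by omega))
    have : bern n n 0 x.1 = (x.1).1 ^ n := by
      unfold bern; simp
    rw [this, ContinuousMap.one_apply, mul_one]
    positivity
  · rcases lt_or_eq_of_le h2 with hx2 | hx2
    · refine lt_of_lt_of_le ?_ (le_maxProdNum n 1 x 0 n (by omega) (by omega))
      have : bern n 0 n x.1 = (x.1).2 ^ n := by
        unfold bern; simp
      rw [this, ContinuousMap.one_apply, mul_one]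
      positivity
    · refine lt_of_lt_of_le ?_ (le_maxProdNum n 1 x 0 0 (by omega) (by omega))
      have : bern n 0 0 x.1 = (1 - (x.1).1 - (x.1).2) ^ n := by
        unfold bern; simp
      rw [this, ContinuousMap.one_apply, mul_one, ← hx1, ← hx2]
      norm_num

lemma maxProdNum_mono (n : ℕ) (f g : C(Tri, ℝ)) (hfg : f ≤ g) (x : Tri) :
    maxProdNum n f x ≤ maxProdNum n g x := by
  refine maxProdNum_le n f x _ fun i j hi hij => ?_
  refine le_trans ?_ (le_maxProdNum n g x i j hi hij)
  exact mul_le_mul_of_nonneg_left (hfg _) (bern_nonneg n i j x)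

lemma maxProdNum_subadd (n : ℕ) (f g : C(Tri, ℝ)) (x : Tri) :
    maxProdNum n (f + g) x ≤ maxProdNum n f x + maxProdNum n g x := by
  refine maxProdNum_le n (f + g) x _ fun i j hi hij => ?_
  rw [ContinuousMap.add_apply, mul_add]
  exact add_le_add (le_maxProdNum n f x i j hi hij) (le_maxProdNum n g x i j hi hij)

lemma maxProdNum_smul (n : ℕ) (a : ℝ) (ha : 0 ≤ a) (f : C(Tri, ℝ)) (x : Tri) :
    maxProdNum n (a • f) x = a * maxProdNum n f x := by
  unfold maxProdNum
  rw [Real.mul_iSup_of_nonneg ha]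
  congr 1; funext i
  rw [Real.mul_iSup_of_nonneg ha]
  congr 1; funext j
  rw [ContinuousMap.smul_apply, smul_eq_mul]; ring

/-- The bivariate max-product Bernstein operators on the triangle `Δ` are sublinear,
monotone and unital. -/
theorem stmt18 (T : ℕ → C(Tri, ℝ) → C(Tri, ℝ))
    (hT : ∀ (n : ℕ) (f : C(Tri, ℝ)) (x : Tri),
      T n f x = maxProdNum n f x / maxProdNum n 1 x) :
    (∀ n (f g : C(Tri, ℝ)), T n (f + g) ≤ T n f + T n g) ∧
    (∀ n (a : ℝ) (f : C(Tri, ℝ)), 0 ≤ a → T n (a • f) = a • T n f) ∧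
    (∀ n (f g : C(Tri, ℝ)), f ≤ g → T n f ≤ T n g) ∧
    (∀ n, T n 1 = 1) := by
  refine ⟨?_, ?_, ?_, ?_⟩
  · intro n f g
    rw [ContinuousMap.le_def]
    intro x
    rw [ContinuousMap.add_apply, hT n (f + g) x, hT n f x, hT n g x, ← add_div]
    exact div_le_div_of_nonneg_right (maxProdNum_subadd n f g x)
      (maxProdNum_one_pos n x).le |>.trans_eq rfl
  · intro n a f ha
    ext x
    rw [ContinuousMap.smul_apply, hT n (a • f) x, hT n f x, maxProdNum_smul n a ha f x,
      smul_eq_mul, mul_div_assoc]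
  · intro n f g hfg
    rw [ContinuousMap.le_def]
    intro x
    rw [hT n f x, hT n g x]
    exact div_le_div_of_nonneg_right (maxProdNum_mono n f g hfg x)
      (maxProdNum_one_pos n x).le |>.trans_eq rfl
  · intro n
    ext x
    rw [hT n 1 x, div_self (ne_of_gt (maxProdNum_one_pos n x)), ContinuousMap.one_apply]
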